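/- Let (Ω, ℱ, μ) be a probability space, E a measurable space, Z : Ω → E, U : Ω → ℝ, Y : Ω → ℝ random variables with Y integrable, and g : E → ℝ measurable. Define Y* := g(Z) + U. Assume: (i) Z and U are independent; (ii) h : ℝ → ℝ is measurable, h(Y*) is integrable, and h ∘ Y* is a version of the conditional expectation E[Y | σ(Y*, Z)]; (iii) for every t ∈ ℝ the random variable ω ↦ h(t + U(ω)) is integrable. Define H : ℝ → ℝ by H(t) := E[h(t + U)]. Then H(g(Z)) is a version of E[Y | σ(Z)], i.e. E[Y | σ(Z)] = H ∘ g ∘ Z holds μ-almost surely. -/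

import Mathlib

open MeasureTheory ProbabilityTheory

/-- Theorem 2.1 (core representation, no controls): in the model `Y* = g(Z) + U` with
`Z ⊥ U`, if `h ∘ Y*` is a version of `E[Y | σ(Y*, Z)]`, then `H ∘ g ∘ Z` with
`H t := E[h (t + U)]` is a version of `E[Y | σ(Z)]`. -/
theorem stmt_0 {Ω E : Type*} [MeasurableSpace Ω] [MeasurableSpace E]
    (μ : Measure Ω) [IsProbabilityMeasure μ]
    (Z : Ω → E) (U Y : Ω → ℝ)
    (hZmeas : Measurable Z) (hUmeas : Measurable U) (hYmeas : Measurable Y)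
    (hYint : Integrable Y μ)
    (g : E → ℝ) (hgmeas : Measurable g)
    (Ystar : Ω → ℝ) (hYstar : ∀ ω, Ystar ω = g (Z ω) + U ω)
    (hindep : IndepFun Z U μ)
    (h : ℝ → ℝ) (hhmeas : Measurable h)
    (hhint : Integrable (fun ω => h (Ystar ω)) μ)
    (hcond : μ[Y | MeasurableSpace.comap (fun ω => (Ystar ω, Z ω)) inferInstance]
        =ᵐ[μ] fun ω => h (Ystar ω))
    (hint : ∀ t : ℝ, Integrable (fun ω => h (t + U ω)) μ)
    (H : ℝ → ℝ) (hH : ∀ t : ℝ, H t = ∫ ω, h (t + U ω) ∂μ) :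
    μ[Y | MeasurableSpace.comap Z inferInstance] =ᵐ[μ] fun ω => H (g (Z ω)) := by
  classical
  have hYstarMeas : Measurable Ystar := by
    have : Ystar = fun ω => g (Z ω) + U ω := funext hYstar
    rw [this]; exact (hgmeas.comp hZmeas).add hUmeas
  have hm : MeasurableSpace.comap Z inferInstance ≤ ‹MeasurableSpace Ω› := hZmeas.comap_le
  have hmYZ : MeasurableSpace.comap (fun ω => (Ystar ω, Z ω)) inferInstance ≤ ‹MeasurableSpace Ω› := (hYstarMeas.prodMk hZmeas).comap_le
  have hle : MeasurableSpace.comap Z inferInstance ≤ MeasurableSpace.comap (fun ω => (Ystar ω, Z ω)) inferInstance := by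
    have : Z = Prod.snd ∘ (fun ω => (Ystar ω, Z ω)) := rfl
    rw [this, ← MeasurableSpace.comap_comp]
    exact MeasurableSpace.comap_mono measurable_snd.comap_le
  -- tower property
  have tower : μ[Y | MeasurableSpace.comap Z inferInstance] =ᵐ[μ] μ[(fun ω => h (Ystar ω)) | MeasurableSpace.comap Z inferInstance] := by
    have h1 : μ[μ[Y | MeasurableSpace.comap (fun ω => (Ystar ω, Z ω)) inferInstance] | MeasurableSpace.comap Z inferInstance] =ᵐ[μ] μ[Y | MeasurableSpace.comap Z inferInstance] := condExp_condExp_of_le hle hmYZ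
    have h2 : μ[μ[Y | MeasurableSpace.comap (fun ω => (Ystar ω, Z ω)) inferInstance] | MeasurableSpace.comap Z inferInstance] =ᵐ[μ] μ[(fun ω => h (Ystar ω)) | MeasurableSpace.comap Z inferInstance] :=
      condExp_congr_ae hcond
    exact h1.symm.trans h2
  -- independence: the law of the pair is the product of laws
  set ν : Measure E := μ.map Z with hν
  set ρ : Measure ℝ := μ.map U with hρ
  have hmap : μ.map (fun ω => (Z ω, U ω)) = ν.prod ρ :=
    (indepFun_iff_map_prod_eq_prod_map_map hZmeas.aemeasurable hUmeas.aemeasurable).mp hindep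
  haveI : IsProbabilityMeasure ν := Measure.isProbabilityMeasure_map hZmeas.aemeasurable
  haveI : IsProbabilityMeasure ρ := Measure.isProbabilityMeasure_map hUmeas.aemeasurable
  set F : E × ℝ → ℝ := fun p => h (g p.1 + p.2) with hF
  have hFmeas : Measurable F := hhmeas.comp ((hgmeas.comp measurable_fst).add measurable_snd)
  have hpairmeas : Measurable (fun ω => (Z ω, U ω)) := hZmeas.prodMk hUmeas
  have hcomp : ∀ ω, F (Z ω, U ω) = h (Ystar ω) := fun ω => by
    simp [hF, (hYstar ω).symm]
  have hFint : Integrable F (ν.prod ρ) := by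
    rw [← hmap]
    rw [integrable_map_measure hFmeas.aestronglyMeasurable hpairmeas.aemeasurable]
    exact hhint.congr (Filter.Eventually.of_forall fun ω => (hcomp ω).symm)
  -- the integrated function
  set φ : E → ℝ := fun z => ∫ u, F (z, u) ∂ρ with hφ
  have hφmeas : StronglyMeasurable φ := hFmeas.stronglyMeasurable.integral_prod_right'
  have hφint : Integrable φ ν := hFint.integral_prod_left
  have hφeq : ∀ z, φ z = H (g z) := by
    intro z
    rw [hH (g z), hφ]
    simp only [hF]
    rw [hρ]
    exact integral_map hUmeas.aemeasurable
      ((hhmeas.comp (measurable_const.add measurable_id)).aestronglyMeasurable)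
  -- integrability of H ∘ g ∘ Z
  have hHgZint : Integrable (fun ω => H (g (Z ω))) μ := by
    have h1 : Integrable (φ ∘ Z) μ :=
      (integrable_map_measure hφmeas.aestronglyMeasurable hZmeas.aemeasurable).mp
        (hν ▸ hφint)
    exact h1.congr (Filter.Eventually.of_forall fun ω => hφeq (Z ω))
  -- strong measurability of H ∘ g ∘ Z with respect to m
  have hZm : @Measurable Ω E (MeasurableSpace.comap Z inferInstance) _ Z := fun s hs => ⟨s, hs, rfl⟩
  have hsm : AEStronglyMeasurable[MeasurableSpace.comap Z inferInstance] (fun ω => H (g (Z ω))) μ := by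
    refine AEStronglyMeasurable.congr
      (StronglyMeasurable.aestronglyMeasurable (hφmeas.comp_measurable hZm))
      (Filter.Eventually.of_forall fun ω => hφeq (Z ω))
  -- the set-integral identity
  have hsetint : ∀ s : Set Ω, MeasurableSet[MeasurableSpace.comap Z inferInstance] s → μ s < ⊤ →
      ∫ ω in s, H (g (Z ω)) ∂μ = ∫ ω in s, h (Ystar ω) ∂μ := by
    rintro s ⟨A, hA, rfl⟩ -
    have hsA : Z ⁻¹' A = (fun ω => (Z ω, U ω)) ⁻¹' (A ×ˢ Set.univ) := by
      ext ω; simp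
    calc ∫ ω in Z ⁻¹' A, H (g (Z ω)) ∂μ
        = ∫ ω in Z ⁻¹' A, φ (Z ω) ∂μ := by
          exact setIntegral_congr_fun (hZmeas hA) fun ω _ => (hφeq (Z ω)).symm
      _ = ∫ z in A, φ z ∂ν := by
          rw [hν, setIntegral_map hA hφmeas.aestronglyMeasurable hZmeas.aemeasurable]
      _ = ∫ p in A ×ˢ Set.univ, F p ∂(ν.prod ρ) := by
          have hFint' : Integrable F ((ν.restrict A).prod ρ) := by
            rw [Measure.restrict_prod_eq_prod_univ]
            exact hFint.restrict
          rw [← Measure.restrict_prod_eq_prod_univ]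
          exact (integral_prod F hFint').symm
      _ = ∫ ω in Z ⁻¹' A, h (Ystar ω) ∂μ := by
          rw [← hmap, hsA,
            setIntegral_map (hA.prod MeasurableSet.univ) hFmeas.aestronglyMeasurable
              hpairmeas.aemeasurable]
          exact setIntegral_congr_fun (hpairmeas (hA.prod MeasurableSet.univ))
            fun ω _ => hcomp ω
  -- conclude
  refine tower.trans ?_
  refine (ae_eq_condExp_of_forall_setIntegral_eq hm hhint
    (fun s _ _ => hHgZint.integrableOn) hsetint hsm).symm
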